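/- For every permutation w of {1,…,n}, the minimum of Σ_{s=1}^k (j_s − i_s) over all factorizations w = (i₁ j₁)(i₂ j₂)⋯(i_k j_k) of w into a product of transpositions (i_s j_s) with i_s < j_s equals Σ_{i : w(i) > i} (w(i) − i). -/

import Mathlib

/-- The depth of a permutation `w` of `{1,…,n}`:
`dep(w) = ∑_{i : w(i) > i} (w(i) - i)`. -/
def dep {n : ℕ} (w : Equiv.Perm (Fin n)) : ℕ :=
  ∑ i ∈ Finset.univ.filter (fun i : Fin n => i < w i), ((w i : ℕ) - (i : ℕ))

lemma dep_eq {n : ℕ} (w : Equiv.Perm (Fin n)) :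
    dep w = ∑ i : Fin n, ((w i : ℕ) - (i : ℕ)) := by
  rw [dep]
  apply Finset.sum_filter_of_ne
  intro i _ h
  rw [Fin.lt_def]
  omega

lemma dep_mul_le {n : ℕ} (u v : Equiv.Perm (Fin n)) : dep (u * v) ≤ dep u + dep v := by
  rw [dep_eq, dep_eq, dep_eq]
  calc ∑ i : Fin n, (((u * v) i : ℕ) - (i : ℕ))
      ≤ ∑ i : Fin n, (((u (v i) : ℕ) - ((v i : ℕ))) + ((v i : ℕ) - (i : ℕ))) := by
        apply Finset.sum_le_sum
        intro i _
        simp only [Equiv.Perm.mul_apply]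
        omega
    _ = (∑ i : Fin n, ((u (v i) : ℕ) - ((v i : ℕ)))) + ∑ i : Fin n, ((v i : ℕ) - (i : ℕ)) :=
        Finset.sum_add_distrib
    _ = (∑ i : Fin n, ((u i : ℕ) - (i : ℕ))) + ∑ i : Fin n, ((v i : ℕ) - (i : ℕ)) := by
        rw [Equiv.sum_comp v (fun j : Fin n => ((u j : ℕ) - (j : ℕ)))]

lemma dep_swap {n : ℕ} {a b : Fin n} (h : a < b) :
    dep (Equiv.swap a b) = (b : ℕ) - (a : ℕ) := by
  have hv : (a : ℕ) < (b : ℕ) := h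
  rw [dep_eq, Finset.sum_eq_single a]
  · rw [Equiv.swap_apply_left]
  · intro i _ hia
    by_cases hib : i = b
    · subst hib
      rw [Equiv.swap_apply_right]
      omega
    · rw [Equiv.swap_apply_of_ne_of_ne hia hib]
      omega
  · intro h'
    exact absurd (Finset.mem_univ a) h'

lemma dep_prod_le {n : ℕ} (l : List (Fin n × Fin n)) (h : ∀ x ∈ l, x.1 < x.2) :
    dep (l.map (fun x => Equiv.swap x.1 x.2)).prod
      ≤ (l.map (fun x => (x.2 : ℕ) - (x.1 : ℕ))).sum := by
  induction l with
  | nil => simp [dep_eq]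
  | cons hd tl ih =>
    simp only [List.map_cons, List.prod_cons, List.sum_cons]
    calc dep (Equiv.swap hd.1 hd.2 * (tl.map (fun x => Equiv.swap x.1 x.2)).prod)
        ≤ dep (Equiv.swap hd.1 hd.2) + dep (tl.map (fun x => Equiv.swap x.1 x.2)).prod :=
          dep_mul_le _ _
      _ ≤ ((hd.2 : ℕ) - (hd.1 : ℕ)) + (tl.map (fun x => (x.2 : ℕ) - (x.1 : ℕ))).sum := by
          apply Nat.add_le_add
          · rw [dep_swap (h hd (List.mem_cons_self))]
          · exact ih (fun x hx => h x (List.mem_cons_of_mem _ hx))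

lemma dep_key {n : ℕ} (w w' : Equiv.Perm (Fin n)) (a : Fin n) (k : ℕ)
    (h1 : ∀ i, i ≠ a → ((w' i : ℕ) - (i : ℕ)) = ((w i : ℕ) - (i : ℕ)))
    (h2 : ((w a : ℕ) - (a : ℕ)) = ((w' a : ℕ) - (a : ℕ)) + k) :
    dep w = dep w' + k := by
  rw [dep_eq, dep_eq]
  have hpt : ∀ i : Fin n,
      ((w i : ℕ) - (i : ℕ)) = ((w' i : ℕ) - (i : ℕ)) + (if i = a then k else 0) := by
    intro i
    by_cases hi : i = a
    · subst hi; simp [h2]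
    · simp [hi, h1 i hi]
  rw [Finset.sum_congr rfl (fun i _ => hpt i), Finset.sum_add_distrib,
      Finset.sum_ite_eq' Finset.univ a (fun _ => k)]
  simp

lemma exists_fact {n : ℕ} : ∀ (m : ℕ) (w : Equiv.Perm (Fin n)), dep w = m →
    ∃ l : List (Fin n × Fin n), (∀ x ∈ l, x.1 < x.2) ∧
      (l.map (fun x => Equiv.swap x.1 x.2)).prod = w ∧
      dep w = (l.map (fun x => (x.2 : ℕ) - (x.1 : ℕ))).sum := by
  intro m
  induction m using Nat.strong_induction_on with
  | _ m ih =>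
  intro w hm
  by_cases hw : w = 1
  · exact ⟨[], by simp, by simp [hw], by simp [hw, dep_eq]⟩
  · have hS : (Finset.univ.filter (fun i : Fin n => w i ≠ i)).Nonempty := by
      by_contra h
      apply hw
      ext i
      rw [Finset.not_nonempty_iff_eq_empty, Finset.filter_eq_empty_iff] at h
      have := h (Finset.mem_univ i)
      simp only [ne_eq, not_not] at this
      simp [this]
    set S := Finset.univ.filter (fun i : Fin n => w i ≠ i) with hSdef
    set d := S.max' hS with hddef
    have hd : w d ≠ d := (Finset.mem_filter.mp (S.max'_mem hS)).2
    have hmax : ∀ i, w i ≠ i → i ≤ d := by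
      intro i hi
      exact S.le_max' i (by simp [hSdef, hi])
    have hwd : w d < d := by
      rcases lt_or_gt_of_ne hd with h | h
      · exact h
      · exfalso
        have h1 : w (w d) = w d := by
          by_contra hne
          exact absurd h (not_lt.mpr (hmax _ hne))
        exact hd (w.injective h1)
    have hwdv : ((w d : ℕ)) < (d : ℕ) := hwd
    set a := w⁻¹ d with hadef
    have hwa : w a = d := w.apply_symm_apply d
    have had : a ≠ d := by
      intro h
      rw [h] at hwa
      exact hd hwa
    have ha : a < d := by
      refine lt_of_le_of_ne (hmax a ?_) had
      rw [hwa]; exact fun h => had h.symm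
    have hav : (a : ℕ) < (d : ℕ) := ha
    by_cases hc : a ≤ w d
    · -- left multiply by swap (w d) d
      have hcv : (a : ℕ) ≤ ((w d : ℕ)) := hc
      set c := w d with hcdef
      set w' := Equiv.swap c d * w with hw'def
      have h1 : ∀ i, i ≠ a → ((w' i : ℕ) - (i : ℕ)) = ((w i : ℕ) - (i : ℕ)) := by
        intro i hia
        by_cases hid : i = d
        · subst hid
          have : w' d = d := by
            rw [hw'def, Equiv.Perm.mul_apply, ← hcdef, Equiv.swap_apply_left]
          rw [this]
          omega
        · have hwi1 : w i ≠ c := by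
            intro h
            exact hid (w.injective (h.trans hcdef))
          have hwi2 : w i ≠ d := by
            intro h
            exact hia (w.injective (h.trans hwa.symm))
          rw [hw'def, Equiv.Perm.mul_apply, Equiv.swap_apply_of_ne_of_ne hwi1 hwi2]
      have h2 : ((w a : ℕ) - (a : ℕ)) = ((w' a : ℕ) - (a : ℕ)) + ((d : ℕ) - (c : ℕ)) := by
        have : w' a = c := by
          rw [hw'def, Equiv.Perm.mul_apply, hwa, Equiv.swap_apply_right]
        rw [this, hwa]
        omega
      have hk := dep_key w w' a ((d : ℕ) - (c : ℕ)) h1 h2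
      have hlt : dep w' < m := by omega
      obtain ⟨l', hl1, hl2, hl3⟩ := ih (dep w') hlt w' rfl
      refine ⟨(c, d) :: l', ?_, ?_, ?_⟩
      · intro x hx
        rcases List.mem_cons.mp hx with h | h
        · subst h; exact hwd
        · exact hl1 x h
      · rw [List.map_cons, List.prod_cons, hl2, hw'def, ← mul_assoc,
          Equiv.swap_mul_self, one_mul]
      · simp only [List.map_cons, List.sum_cons, ← hl3]
        omega
    · -- right multiply by swap a d
      have hcv : ((w d : ℕ)) < (a : ℕ) := by
        have := lt_of_not_ge hc
        exact this
      set w' := w * Equiv.swap a d with hw'def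
      have h1 : ∀ i, i ≠ a → ((w' i : ℕ) - (i : ℕ)) = ((w i : ℕ) - (i : ℕ)) := by
        intro i hia
        by_cases hid : i = d
        · subst hid
          have : w' d = d := by
            rw [hw'def, Equiv.Perm.mul_apply, Equiv.swap_apply_right, hwa]
          rw [this]
          omega
        · rw [hw'def, Equiv.Perm.mul_apply, Equiv.swap_apply_of_ne_of_ne hia hid]
      have h2 : ((w a : ℕ) - (a : ℕ)) = ((w' a : ℕ) - (a : ℕ)) + ((d : ℕ) - (a : ℕ)) := by
        have : w' a = w d := by
          rw [hw'def, Equiv.Perm.mul_apply, Equiv.swap_apply_left]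
        rw [this, hwa]
        omega
      have hk := dep_key w w' a ((d : ℕ) - (a : ℕ)) h1 h2
      have hlt : dep w' < m := by omega
      obtain ⟨l', hl1, hl2, hl3⟩ := ih (dep w') hlt w' rfl
      refine ⟨l' ++ [(a, d)], ?_, ?_, ?_⟩
      · intro x hx
        rcases List.mem_append.mp hx with h | h
        · exact hl1 x h
        · simp at h; subst h; exact ha
      · rw [List.map_append, List.prod_append, hl2]
        simp only [List.map_cons, List.map_nil, List.prod_cons, List.prod_nil, mul_one]
        rw [hw'def, mul_assoc, Equiv.swap_mul_self, mul_one]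
      · simp only [List.map_append, List.sum_append, ← hl3, List.map_cons, List.map_nil,
          List.sum_cons, List.sum_nil, add_zero]
        omega

/-- The minimum of `∑_s (j_s - i_s)` over all factorizations
`w = (i₁ j₁)(i₂ j₂)⋯(i_k j_k)` of `w` into transpositions `(i_s j_s)` with
`i_s < j_s` equals `dep(w) = ∑_{i : w(i) > i} (w(i) - i)`. -/
theorem depth_is_min_transposition_cost (n : ℕ) (w : Equiv.Perm (Fin n)) :
    IsLeast
      {m : ℕ | ∃ l : List (Fin n × Fin n),
        (∀ x ∈ l, x.1 < x.2) ∧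
        (l.map (fun x => Equiv.swap x.1 x.2)).prod = w ∧
        m = (l.map (fun x => (x.2 : ℕ) - (x.1 : ℕ))).sum}
      (dep w) := by
  constructor
  · obtain ⟨l, h1, h2, h3⟩ := exists_fact (dep w) w rfl
    exact ⟨l, h1, h2, h3⟩
  · rintro m ⟨l, hord, hprod, rfl⟩
    calc dep w = dep (l.map (fun x => Equiv.swap x.1 x.2)).prod := by rw [hprod]
      _ ≤ _ := dep_prod_le l hord
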